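/- (Measurement update over-approximation.) Let Z(ĉ,Ĝ) be a zonotope in ℝⁿ with ĉ ∈ ℝⁿ and Ĝ ∈ ℝ^{n×e}. For j = 1,…,m let Hⱼ ∈ ℝ^{p×n}, yⱼ ∈ ℝᵖ, let rⱼ ∈ ℝᵖ be a vector with nonnegative entries, let Sⱼ = { x ∈ ℝⁿ : |(Hⱼ x − yⱼ)ᵢ| ≤ (rⱼ)ᵢ for all i = 1,…,p } be the corresponding strip, and let λⱼ ∈ ℝ^{n×p} be an arbitrary design matrix. Define c̄ = ĉ + Σⱼ₌₁^m λⱼ (yⱼ − Hⱼ ĉ) and Ḡ = [(I − Σⱼ₌₁^m λⱼ Hⱼ) Ĝ, λ₁ diag(r₁), …, λ_m diag(r_m)] ∈ ℝ^{n×(e+mp)} (horizontal concatenation). Then Z(ĉ,Ĝ) ∩ S₁ ∩ ⋯ ∩ S_m ⊆ Z(c̄, Ḡ). -/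

import Mathlib

open Matrix

/-- A zonotope with center `c` and generator matrix `G`. -/
def Zonotope {n ι : Type*} [Fintype ι] (c : n → ℝ) (G : Matrix n ι ℝ) : Set (n → ℝ) :=
  { x | ∃ z : ι → ℝ, (∀ i, |z i| ≤ 1) ∧ x = c + G.mulVec z }

/-- Measurement update over-approximation: the intersection of a zonotope with a family of
measurement strips is contained in the zonotope with center
`c̄ = ĉ + Σⱼ λⱼ (yⱼ − Hⱼ ĉ)` and generator matrix
`Ḡ = [(I − Σⱼ λⱼ Hⱼ) Ĝ, λ₁ diag(r₁), …, λ_m diag(r_m)]`. -/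
theorem measurement_update_over_approximation {n e p m : ℕ}
    (chat : Fin n → ℝ) (Ghat : Matrix (Fin n) (Fin e) ℝ)
    (H : Fin m → Matrix (Fin p) (Fin n) ℝ) (y : Fin m → Fin p → ℝ)
    (r : Fin m → Fin p → ℝ) (hr : ∀ j i, 0 ≤ r j i)
    (lam : Fin m → Matrix (Fin n) (Fin p) ℝ)
    (S : Fin m → Set (Fin n → ℝ))
    (hS : ∀ j, S j = { x | ∀ i, |((H j).mulVec x - y j) i| ≤ r j i })
    (cbar : Fin n → ℝ)
    (hcbar : cbar = chat + ∑ j, (lam j).mulVec (y j - (H j).mulVec chat))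
    (Gbar : Matrix (Fin n) (Fin e ⊕ Fin m × Fin p) ℝ)
    (hGbar : Gbar = Matrix.fromCols ((1 - ∑ j, lam j * H j) * Ghat)
      (Matrix.of fun i jk => (lam jk.1 * Matrix.diagonal (r jk.1)) i jk.2)) :
    Zonotope chat Ghat ∩ ⋂ j, S j ⊆ Zonotope cbar Gbar := by
  rintro x ⟨⟨z, hz, hxz⟩, hxS⟩
  have hx2 : ∀ j i, |((H j).mulVec x - y j) i| ≤ r j i := by
    intro j i
    have := Set.mem_iInter.mp hxS j
    rw [hS j] at this
    exact this i
  set v : Fin m → Fin p → ℝ := fun j => (H j).mulVec x - y j with hv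
  set w2 : Fin m × Fin p → ℝ := fun jk =>
    if r jk.1 jk.2 = 0 then 0 else v jk.1 jk.2 / r jk.1 jk.2 with hw2
  have key : ∀ j k, r j k * w2 (j, k) = v j k := by
    intro j k
    by_cases h : r j k = 0
    · have hv0 : v j k = 0 := by
        have := hx2 j k
        rw [h] at this
        exact abs_nonpos_iff.mp this
      simp [hw2, h, hv0]
    · rw [hw2]; simp only [if_neg h]
      field_simp
  refine ⟨Sum.elim z w2, ?_, ?_⟩
  · rintro (i | ⟨j, k⟩)
    · exact hz i
    · simp only [Sum.elim_inr, hw2]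
      by_cases h : r j k = 0
      · simp [h]
      · have hrpos : 0 < r j k := lt_of_le_of_ne (hr j k) (Ne.symm h)
        rw [if_neg h, abs_div, abs_of_pos hrpos, div_le_one hrpos]
        exact hx2 j k
  · rw [hGbar, Matrix.fromCols_mulVec_sumElim]
    have h2 : (Matrix.of fun i jk => (lam jk.1 * Matrix.diagonal (r jk.1)) i jk.2) *ᵥ w2
        = ∑ j, (lam j).mulVec (v j) := by
      funext i
      simp only [Matrix.mulVec, dotProduct, Matrix.of_apply,
        Matrix.mul_diagonal, Finset.sum_apply]
      rw [Fintype.sum_prod_type]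
      refine Finset.sum_congr rfl fun j _ => Finset.sum_congr rfl fun k _ => ?_
      rw [mul_assoc, key j k]
    have hsum : ∀ (u : Fin n → ℝ), (∑ j, lam j * H j) *ᵥ u = ∑ j, lam j *ᵥ ((H j) *ᵥ u) := by
      intro u
      have := map_sum (Matrix.mulVec.addMonoidHomLeft u) (fun j => lam j * H j) Finset.univ
      simp only [Matrix.mulVec.addMonoidHomLeft] at this
      rw [show ((∑ j, lam j * H j) *ᵥ u) = ∑ j, (lam j * H j) *ᵥ u from this]
      exact Finset.sum_congr rfl fun j _ =>
        (Matrix.mulVec_mulVec u (lam j) (H j)).symm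
    rw [h2, hcbar]
    have expand : ((1 - ∑ j, lam j * H j) * Ghat) *ᵥ z
        = Ghat *ᵥ z - ∑ j, lam j *ᵥ ((H j) *ᵥ (Ghat *ᵥ z)) := by
      rw [Matrix.sub_mul, Matrix.one_mul, Matrix.sub_mulVec, ← Matrix.mulVec_mulVec, hsum]
    have hv' : ∀ j, v j = H j *ᵥ (Ghat *ᵥ z) - (y j - H j *ᵥ chat) := by
      intro j
      rw [hv]
      simp only [hxz, Matrix.mulVec_add]
      abel
    have h3 : ∑ j, lam j *ᵥ v j
        = ∑ j, (lam j *ᵥ ((H j) *ᵥ (Ghat *ᵥ z)) - lam j *ᵥ (y j - H j *ᵥ chat)) := by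
      refine Finset.sum_congr rfl fun j _ => ?_
      rw [hv' j, Matrix.mulVec_sub]
    rw [expand, h3, Finset.sum_sub_distrib, hxz]
    abel
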